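/- Along solutions of the rigid body equation dK/dt = [K, Ω] + [Γ, χ], dΓ/dt = [Γ, Ω] (with K, Γ, Ω, χ skew-symmetric matrix curves and constants), the functions tr(Γ^{2k}) and tr(K Γ^{2k−1}) are conserved for every k ≥ 1. -/

import Mathlib

open Matrix

section Aux

variable {n : ℕ}

/-- Entrywise derivative of a matrix curve. -/
def HasDerivAtMat (f : ℝ → Matrix (Fin n) (Fin n) ℝ)
    (f' : Matrix (Fin n) (Fin n) ℝ) (t : ℝ) : Prop :=
  ∀ i j, HasDerivAt (fun s => f s i j) (f' i j) t

lemma HasDerivAtMat.mul {f g : ℝ → Matrix (Fin n) (Fin n) ℝ}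
    {f' g' : Matrix (Fin n) (Fin n) ℝ} {t : ℝ}
    (hf : HasDerivAtMat f f' t) (hg : HasDerivAtMat g g' t) :
    HasDerivAtMat (fun s => f s * g s) (f' * g t + f t * g') t := by
  intro i j
  have h : HasDerivAt (fun s => ∑ k, f s i k * g s k j)
      (∑ k, (f' i k * g t k j + f t i k * g' k j)) t := by
    refine HasDerivAt.fun_sum fun k _ => ?_
    exact (hf i k).mul (hg k j)
  have he : ∀ s, (fun s => f s * g s) s i j = ∑ k, f s i k * g s k j := by
    intro s; simp [Matrix.mul_apply]
  simp only [Matrix.add_apply, Matrix.mul_apply]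
  rw [← Finset.sum_add_distrib]
  exact h.congr_deriv rfl |>.congr_of_eventuallyEq (by filter_upwards with s; exact (he s).symm)

lemma HasDerivAtMat.const (A : Matrix (Fin n) (Fin n) ℝ) (t : ℝ) :
    HasDerivAtMat (fun _ => A) 0 t := fun i j => by
  simpa using hasDerivAt_const t (A i j)

lemma HasDerivAtMat.trace {f : ℝ → Matrix (Fin n) (Fin n) ℝ}
    {f' : Matrix (Fin n) (Fin n) ℝ} {t : ℝ} (hf : HasDerivAtMat f f' t) :
    HasDerivAt (fun s => (f s).trace) f'.trace t := by
  simp only [Matrix.trace, Matrix.diag]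
  exact HasDerivAt.fun_sum fun i _ => hf i i

lemma pow_deriv {G Om : ℝ → Matrix (Fin n) (Fin n) ℝ} {t : ℝ}
    (hG : HasDerivAtMat G (G t * Om t - Om t * G t) t) (m : ℕ) :
    HasDerivAtMat (fun s => (G s) ^ m) (G t ^ m * Om t - Om t * G t ^ m) t := by
  induction m with
  | zero => simpa using HasDerivAtMat.const (1 : Matrix (Fin n) (Fin n) ℝ) t
  | succ m ih =>
      have h := ih.mul hG
      have key : (G t ^ m * Om t - Om t * G t ^ m) * G t
          + G t ^ m * (G t * Om t - Om t * G t)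
          = G t ^ (m + 1) * Om t - Om t * G t ^ (m + 1) := by
        rw [pow_succ]; noncomm_ring
      have heq : (fun s => G s ^ (m + 1)) = fun s => G s ^ m * G s := by
        funext s; rw [pow_succ]
      rw [heq, ← key]
      exact h

lemma const_of_deriv_zero {g : ℝ → ℝ} (h : ∀ t, HasDerivAt g 0 t) :
    ∀ t₁ t₂, g t₁ = g t₂ := by
  intro t₁ t₂
  exact is_const_of_deriv_eq_zero (fun t => (h t).differentiableAt)
    (fun t => (h t).deriv) t₁ t₂

end Aux

/-- Along solutions of `dK/dt = [K, Ω] + [Γ, χ]`, `dΓ/dt = [Γ, Ω]` (with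
`K, Γ, Ω` skew-symmetric matrix curves and `χ` a constant skew-symmetric
matrix), the functions `tr(Γ^{2k})` and `tr(K Γ^{2k-1})` are conserved for
every `k ≥ 1`. -/
theorem stmt_10 {n : ℕ} (K Gam Om : ℝ → Matrix (Fin n) (Fin n) ℝ)
    (chi : Matrix (Fin n) (Fin n) ℝ) (hchi : chiᵀ = -chi)
    (hKs : ∀ t, (K t)ᵀ = -(K t)) (hGs : ∀ t, (Gam t)ᵀ = -(Gam t))
    (hOs : ∀ t, (Om t)ᵀ = -(Om t))
    (hK : ∀ t i j, HasDerivAt (fun s => K s i j)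
      (((K t * Om t - Om t * K t) + (Gam t * chi - chi * Gam t)) i j) t)
    (hGam : ∀ t i j, HasDerivAt (fun s => Gam s i j)
      ((Gam t * Om t - Om t * Gam t) i j) t) :
    ∀ k : ℕ, 1 ≤ k → ∀ t₁ t₂ : ℝ,
      ((Gam t₁) ^ (2 * k)).trace = ((Gam t₂) ^ (2 * k)).trace
      ∧ (K t₁ * (Gam t₁) ^ (2 * k - 1)).trace
          = (K t₂ * (Gam t₂) ^ (2 * k - 1)).trace := by
  have hGmat : ∀ t, HasDerivAtMat Gam (Gam t * Om t - Om t * Gam t) t :=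
    fun t i j => hGam t i j
  have hKmat : ∀ t, HasDerivAtMat K
      ((K t * Om t - Om t * K t) + (Gam t * chi - chi * Gam t)) t :=
    fun t i j => hK t i j
  -- conservation of tr(Γ^m) for every m
  have h1 : ∀ m : ℕ, ∀ t₁ t₂ : ℝ,
      ((Gam t₁) ^ m).trace = ((Gam t₂) ^ m).trace := by
    intro m
    apply const_of_deriv_zero
    intro t
    have h := (pow_deriv (hGmat t) m).trace
    have : (Gam t ^ m * Om t - Om t * Gam t ^ m).trace = 0 := by
      rw [Matrix.trace_sub, Matrix.trace_mul_comm, sub_self]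
    rwa [this] at h
  -- conservation of tr(K Γ^m) for every m
  have h2 : ∀ m : ℕ, ∀ t₁ t₂ : ℝ,
      (K t₁ * (Gam t₁) ^ m).trace = (K t₂ * (Gam t₂) ^ m).trace := by
    intro m
    apply const_of_deriv_zero
    intro t
    have h := ((hKmat t).mul (pow_deriv (hGmat t) m)).trace
    have hz : (((K t * Om t - Om t * K t) + (Gam t * chi - chi * Gam t)) * Gam t ^ m
        + K t * (Gam t ^ m * Om t - Om t * Gam t ^ m)).trace = 0 := by
      have hcomm : Gam t * Gam t ^ m = Gam t ^ m * Gam t := by rw [← pow_succ', ← pow_succ]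
      simp only [Matrix.add_mul, Matrix.sub_mul, Matrix.mul_sub, Matrix.trace_add,
        Matrix.trace_sub, mul_assoc]
      rw [Matrix.trace_mul_comm (Om t) (K t * Gam t ^ m),
        Matrix.trace_mul_comm (chi) (Gam t * Gam t ^ m),
        Matrix.trace_mul_comm (Gam t) (chi * Gam t ^ m), hcomm]
      ring_nf
      rw [mul_assoc chi, Matrix.trace_mul_comm chi (Gam t ^ m * Gam t), mul_assoc (K t)]
      ring
    rwa [hz] at h
  intro k _ t₁ t₂
  exact ⟨h1 (2 * k) t₁ t₂, h2 (2 * k - 1) t₁ t₂⟩
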